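/- Suppose in the follower's maximum 3-cycle packing all variable gadgets are consistent and every clause node δ_c is covered by a 2-cycle with some β-node. Then the truth assignment defined by 'variable is TRUE iff its gadget is consistent-with-TRUE' satisfies every clause of E. -/

import Mathlib

variable {V : Type*} [DecidableEq V]

/-- A directed (simple) cycle given as a list of distinct vertices. -/
def IsDicycle (A : V → V → Prop) (c : List V) : Prop :=
  2 ≤ c.length ∧ c.Nodup ∧ c.Chain' A ∧
    ∀ h : c ≠ [], A (c.getLast h) (c.head h)

def cycVerts (c : List V) : Set V := {v | v ∈ c}

/-- A `K`-cycle packing inside the vertex set `W`. -/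
def IsCyclePackingOn (A : V → V → Prop) (K : ℕ) (W : Set V) (P : Finset (List V)) : Prop :=
  (∀ c ∈ P, IsDicycle A c ∧ c.length ≤ K ∧ ∀ v ∈ c, v ∈ W) ∧
  (P : Set (List V)).Pairwise fun c d => ∀ v, v ∈ c → v ∉ d

def packSize (P : Finset (List V)) : ℕ := ∑ c ∈ P, c.length

def pcovered (P : Finset (List V)) : Set V := {v | ∃ c ∈ P, v ∈ c}

/-- Maximum size of a `K`-cycle packing on `G[W]`. -/
noncomputable def wDir (A : V → V → Prop) (K : ℕ) (W : Set V) : ℕ :=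
  sSup {n | ∃ P, IsCyclePackingOn A K W P ∧ packSize P = n}

/-- Minimum number of `L`-nodes covered over all maximum `K`-cycle packings on `G[W]`. -/
noncomputable def wLDir (A : V → V → Prop) (K : ℕ) (L W : Set V) : ℕ :=
  sInf {k | ∃ P, IsCyclePackingOn A K W P ∧ packSize P = wDir A K W ∧
    (pcovered P ∩ L).ncard = k}

/-- The nodes of a variable gadget: `α_i`, `β_{pol,i}` and the leaf nodes
(`t/τ` for `pol = true`, `f/φ` for `pol = false`). -/
inductive GNode : Type
  | alpha (i : Fin 2)
  | beta (pol : Bool) (i : Fin 2)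
  | leaf (pol : Bool) (i : Fin 2)
deriving DecidableEq

/-- The internal arcs of a variable gadget. -/
def gadgetArc : GNode → GNode → Prop
  | .alpha i, .beta _ j => i = j
  | .beta pol i, .leaf pol' j => pol = pol' ∧ i = j
  | .leaf _ i, .alpha j => i = j
  | .leaf pol i, .leaf pol' j => pol = pol' ∧ i ≠ j
  | _, _ => False

/-- Vertices of the KEP construction: gadget nodes (one gadget per variable in `ι`),
clause nodes (`Fin m`), and the special node `d` (`Unit`). -/
abbrev KVert (ι : Type*) (m : ℕ) := (ι × GNode) ⊕ (Fin m) ⊕ Unit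

/-- The arcs of the KEP construction: gadget-internal arcs, 2-cycles between each clause
node `δ_c` and `d`, and 2-cycles between `δ_c` and `β_{v,pol,i}` exactly when `c` is the
`i`-th clause containing the literal `(v, pol)` (recorded by `occ`). -/
def kepArc {ι : Type*} {m : ℕ} (occ : ι → Bool → Fin 2 → Fin m) :
    KVert ι m → KVert ι m → Prop := fun a b =>
  match a, b with
  | .inl (v, x), .inl (w, y) => v = w ∧ gadgetArc x y
  | .inl (v, .beta pol i), .inr (.inl c) => occ v pol i = c
  | .inr (.inl c), .inl (v, .beta pol i) => occ v pol i = c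
  | .inr (.inl _), .inr (.inr _) => True
  | .inr (.inr _), .inr (.inl _) => True
  | _, _ => False

/-- if in a (maximum) 3-cycle packing of the follower's graph every variable
gadget is consistent with the truth value `A v` (its internal triangles use the
`β`-nodes of polarity `¬ A v`) and every clause node is covered by a 2-cycle with some
`β`-node, then the truth assignment `A` satisfies every clause of `E`. -/
theorem stmt15 {ι : Type*} [DecidableEq ι] {m : ℕ}
    (occ : ι → Bool → Fin 2 → Fin m)
    (E : Fin m → List (ι × Bool))
    (hocc : ∀ (v : ι) (pol : Bool) (i : Fin 2), (v, pol) ∈ E (occ v pol i))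
    (P : Finset (List (KVert ι m)))
    (hP : IsCyclePackingOn (kepArc occ) 3 Set.univ P)
    (hPmax : packSize P = wDir (kepArc occ) 3 Set.univ)
    (A : ι → Bool)
    (hcons : ∀ (v : ι) (i : Fin 2), ∃ c ∈ P,
      cycVerts c = {Sum.inl (v, GNode.alpha i), Sum.inl (v, GNode.beta (!(A v)) i),
        Sum.inl (v, GNode.leaf (!(A v)) i)})
    (hclause : ∀ cl : Fin m, ∃ c ∈ P, ∃ (v : ι) (pol : Bool) (i : Fin 2),
      cycVerts c = {Sum.inr (Sum.inl cl), Sum.inl (v, GNode.beta pol i)}) :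
    ∀ cl : Fin m, ∃ l ∈ E cl, A l.1 = l.2 := by
  intro cl
  obtain ⟨c, hcP, v, pol, i, hcv⟩ := hclause cl
  set x : KVert ι m := Sum.inr (Sum.inl cl) with hx
  set y : KVert ι m := Sum.inl (v, GNode.beta pol i) with hy
  have hmem : ∀ z, z ∈ c ↔ z = x ∨ z = y := by
    intro z
    have := Set.ext_iff.mp hcv z
    simpa [cycVerts, Set.mem_insert_iff] using this
  obtain ⟨hcyc, hpw⟩ := hP
  obtain ⟨⟨hlen, hnd, hch, hlast⟩, _, _⟩ := hcyc c hcP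
  have hxc : x ∈ c := (hmem x).2 (Or.inl rfl)
  have hyc : y ∈ c := (hmem y).2 (Or.inr rfl)
  have hxy : x ≠ y := by simp [hx, hy]
  -- c has length exactly 2
  have hsub : c.toFinset ⊆ {x, y} := by
    intro z hz
    rcases (hmem z).1 (List.mem_toFinset.mp hz) with h | h <;> simp [h]
  have hle : c.length ≤ 2 := by
    have := Finset.card_le_card hsub
    rw [List.toFinset_card_of_nodup hnd] at this
    calc c.length ≤ ({x, y} : Finset _).card := this
    _ ≤ 2 := Finset.card_insert_le _ _ |>.trans (by simp)
  have hlen2 : c.length = 2 := le_antisymm hle hlen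
  obtain ⟨a, b, hab⟩ := List.length_eq_two.mp hlen2
  subst hab
  have hane : a ≠ b := by
    simpa using List.nodup_cons.mp hnd |>.1
  have harc : kepArc occ a b := by
    exact List.isChain_pair.mp hch
  -- identify {a,b} = {x,y}
  have hocccl : occ v pol i = cl := by
    rcases (hmem a).1 (by simp) with ha | ha <;>
      rcases (hmem b).1 (by simp) with hb | hb
    · exact absurd (ha.trans hb.symm) hane
    · subst ha; subst hb; simpa [kepArc, hx, hy] using harc
    · subst ha; subst hb; simpa [kepArc, hx, hy] using harc
    · exact absurd (ha.trans hb.symm) hane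
  have hpolA : pol = A v := by
    by_contra hne
    have hpol : pol = !(A v) := by
      cases pol <;> cases h : A v <;> simp_all
    obtain ⟨c', hc'P, hcv'⟩ := hcons v i
    have hyc' : y ∈ c' := by
      have := Set.ext_iff.mp hcv' y
      rw [hpol] at hy
      simp [cycVerts, hy] at this ⊢
      tauto
    have hxc' : x ∉ c' := by
      intro hx'
      have := Set.ext_iff.mp hcv' x
      simp [cycVerts, hx] at this
      tauto
    have hcc' : ([a, b] : List (KVert ι m)) ≠ c' := by
      intro h; exact hxc' (h ▸ hxc)
    exact hpw hcP hc'P hcc' y hyc hyc'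
  refine ⟨(v, pol), ?_, hpolA.symm⟩
  have := hocc v pol i
  rwa [hocccl] at this
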